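/- Let P(λ) = Σ_{i=0}^g P_i λ^i and Q(λ) = Σ_{i=0}^t Q_i λ^i be matrix polynomials (over ℝ or ℂ) such that the product P(λ)Q(λ) is defined. Then ‖P(λ)Q(λ)‖_F ≤ √(g+1) · √(Σ_{i=0}^g ‖P_i‖₂²) · ‖Q(λ)‖_F, where ‖·‖₂ is the spectral norm of a matrix and the Frobenius norm of a matrix polynomial is ‖P(λ)‖_F := √(Σ_i ‖P_i‖_F²). -/

import Mathlib

open Polynomial

/-- The `i`-th coefficient matrix of a matrix polynomial. -/
noncomputable def polyCoeff {m n : Type*} (M : Matrix m n (Polynomial ℂ)) (i : ℕ) :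
    Matrix m n ℂ := M.map (fun p => p.coeff i)

/-- The Frobenius norm of a matrix polynomial:
`‖P(λ)‖_F = √(∑_i ‖P_i‖_F²)` (independent of the grade chosen). -/
noncomputable def polyFrobNorm {m n : Type*} [Fintype m] [Fintype n]
    (M : Matrix m n (Polynomial ℂ)) : ℝ :=
  Real.sqrt (∑' i : ℕ, ∑ r, ∑ c, ‖(M r c).coeff i‖ ^ 2)

/-- The spectral norm (largest singular value) of a constant matrix. -/
noncomputable def specNorm {m n : Type*} [Fintype m] [Fintype n] (M : Matrix m n ℂ) : ℝ :=
  sSup {r : ℝ | ∃ v : n → ℂ, ∑ j, ‖v j‖ ^ 2 = 1 ∧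
    r = Real.sqrt (∑ i, ‖M.mulVec v i‖ ^ 2)}

namespace PolyFrobAux

/-- Squared Frobenius norm of a constant matrix. -/
noncomputable def frobSq {m n : Type*} [Fintype m] [Fintype n] (A : Matrix m n ℂ) : ℝ :=
  ∑ r, ∑ c, ‖A r c‖ ^ 2

variable {m n p : Type*} [Fintype m] [Fintype n] [Fintype p]

lemma frobSq_nonneg (A : Matrix m n ℂ) : 0 ≤ frobSq A :=
  Finset.sum_nonneg fun _ _ => Finset.sum_nonneg fun _ _ => sq_nonneg _

lemma frobSq_zero : frobSq (0 : Matrix m n ℂ) = 0 := by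
  simp [frobSq]

/-- Cauchy–Schwarz for complex finite sums. -/
lemma cs_complex {ι : Type*} (s : Finset ι) (u v : ι → ℂ) :
    ‖∑ j ∈ s, u j * v j‖ ≤
      Real.sqrt (∑ j ∈ s, ‖u j‖ ^ 2) * Real.sqrt (∑ j ∈ s, ‖v j‖ ^ 2) := by
  have h1 : ‖∑ j ∈ s, u j * v j‖ ≤ ∑ j ∈ s, ‖u j‖ * ‖v j‖ := by
    refine (norm_sum_le _ _).trans (le_of_eq ?_)
    exact Finset.sum_congr rfl fun j _ => norm_mul _ _
  have h2 : (∑ j ∈ s, ‖u j‖ * ‖v j‖) ^ 2 ≤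
      (∑ j ∈ s, ‖u j‖ ^ 2) * ∑ j ∈ s, ‖v j‖ ^ 2 :=
    Finset.sum_mul_sq_le_sq_mul_sq s _ _
  have h0 : 0 ≤ ∑ j ∈ s, ‖u j‖ * ‖v j‖ :=
    Finset.sum_nonneg fun _ _ => mul_nonneg (norm_nonneg _) (norm_nonneg _)
  calc ‖∑ j ∈ s, u j * v j‖ ≤ ∑ j ∈ s, ‖u j‖ * ‖v j‖ := h1
    _ = Real.sqrt ((∑ j ∈ s, ‖u j‖ * ‖v j‖) ^ 2) := (Real.sqrt_sq h0).symm
    _ ≤ Real.sqrt ((∑ j ∈ s, ‖u j‖ ^ 2) * ∑ j ∈ s, ‖v j‖ ^ 2) := Real.sqrt_le_sqrt h2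
    _ = _ := Real.sqrt_mul (Finset.sum_nonneg fun _ _ => sq_nonneg _) _

/-- The defining set of the spectral norm. -/
def specSet (M : Matrix m n ℂ) : Set ℝ :=
  {r : ℝ | ∃ v : n → ℂ, ∑ j, ‖v j‖ ^ 2 = 1 ∧
    r = Real.sqrt (∑ i, ‖M.mulVec v i‖ ^ 2)}

lemma specNorm_eq (M : Matrix m n ℂ) : specNorm M = sSup (specSet M) := rfl

lemma mem_specSet_le (M : Matrix m n ℂ) {r : ℝ} (hr : r ∈ specSet M) :
    r ≤ Real.sqrt (frobSq M) := by
  obtain ⟨v, hv, rfl⟩ := hr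
  refine Real.sqrt_le_sqrt ?_
  refine Finset.sum_le_sum fun i _ => ?_
  have h : ‖M.mulVec v i‖ ≤ Real.sqrt (∑ j, ‖M i j‖ ^ 2) * Real.sqrt (∑ j, ‖v j‖ ^ 2) := by
    simpa [Matrix.mulVec, dotProduct] using cs_complex Finset.univ (fun j => M i j) v
  rw [hv, Real.sqrt_one, mul_one] at h
  calc ‖M.mulVec v i‖ ^ 2 ≤ Real.sqrt (∑ j, ‖M i j‖ ^ 2) ^ 2 :=
        pow_le_pow_left₀ (norm_nonneg _) h 2
    _ = ∑ j, ‖M i j‖ ^ 2 := Real.sq_sqrt (Finset.sum_nonneg fun _ _ => sq_nonneg _)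

lemma bddAbove_specSet (M : Matrix m n ℂ) : BddAbove (specSet M) :=
  ⟨Real.sqrt (frobSq M), fun _ hr => mem_specSet_le M hr⟩

lemma specNorm_nonneg (M : Matrix m n ℂ) : 0 ≤ specNorm M := by
  rcases Set.eq_empty_or_nonempty (specSet M) with h | h
  · rw [specNorm_eq, h, Real.sSup_empty]
  · obtain ⟨r, hr⟩ := h
    have hr0 : 0 ≤ r := by obtain ⟨v, -, rfl⟩ := hr; exact Real.sqrt_nonneg _
    exact hr0.trans (le_csSup (bddAbove_specSet M) hr)

lemma mulVec_sq_le (M : Matrix m n ℂ) (v : n → ℂ) :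
    ∑ i, ‖M.mulVec v i‖ ^ 2 ≤ specNorm M ^ 2 * ∑ j, ‖v j‖ ^ 2 := by
  set S := ∑ j, ‖v j‖ ^ 2 with hS
  have hS0 : 0 ≤ S := Finset.sum_nonneg fun _ _ => sq_nonneg _
  by_cases hz : S = 0
  · have hv : ∀ j, v j = 0 := by
      intro j
      have := (Finset.sum_eq_zero_iff_of_nonneg (fun j _ => sq_nonneg ‖v j‖)).1 hz j
        (Finset.mem_univ j)
      have : ‖v j‖ = 0 := by
        have := this
        nlinarith [norm_nonneg (v j), sq_nonneg ‖v j‖]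
      simpa using this
    have hv0 : v = 0 := funext hv
    simp [hv0, hz, Matrix.mulVec_zero]
  · have hSpos : 0 < S := lt_of_le_of_ne hS0 (Ne.symm hz)
    set c := Real.sqrt S with hc
    have hcpos : 0 < c := Real.sqrt_pos.2 hSpos
    have hc2 : c ^ 2 = S := Real.sq_sqrt hS0
    set w : n → ℂ := fun j => (c : ℂ)⁻¹ * v j with hw
    have hnormw : ∀ j, ‖w j‖ = c⁻¹ * ‖v j‖ := by
      intro j
      rw [hw]
      dsimp only
      rw [norm_mul, norm_inv, Complex.norm_real, Real.norm_eq_abs, abs_of_pos hcpos]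
    have hwsum : ∑ j, ‖w j‖ ^ 2 = 1 := by
      have : ∑ j, ‖w j‖ ^ 2 = c⁻¹ ^ 2 * S := by
        rw [hS, Finset.mul_sum]
        exact Finset.sum_congr rfl fun j _ => by rw [hnormw j]; ring
      rw [this, inv_pow, hc2]
      field_simp
    have hmw : ∀ i, M.mulVec w i = (c : ℂ)⁻¹ * M.mulVec v i := by
      intro i
      have : w = ((c : ℂ)⁻¹ : ℂ) • v := by funext j; simp [hw, smul_eq_mul]
      rw [this, Matrix.mulVec_smul]
      simp [smul_eq_mul]
    have hsum : ∑ i, ‖M.mulVec w i‖ ^ 2 = c⁻¹ ^ 2 * ∑ i, ‖M.mulVec v i‖ ^ 2 := by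
      rw [Finset.mul_sum]
      refine Finset.sum_congr rfl fun i _ => ?_
      rw [hmw i, norm_mul, mul_pow]
      congr 1
      rw [norm_inv, Complex.norm_real, Real.norm_eq_abs, abs_of_pos hcpos]
    have hle : Real.sqrt (∑ i, ‖M.mulVec w i‖ ^ 2) ≤ specNorm M :=
      le_csSup (bddAbove_specSet M) ⟨w, hwsum, rfl⟩
    have hsq : ∑ i, ‖M.mulVec w i‖ ^ 2 ≤ specNorm M ^ 2 := by
      have h0 : 0 ≤ ∑ i, ‖M.mulVec w i‖ ^ 2 :=
        Finset.sum_nonneg fun _ _ => sq_nonneg _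
      calc ∑ i, ‖M.mulVec w i‖ ^ 2
          = Real.sqrt (∑ i, ‖M.mulVec w i‖ ^ 2) ^ 2 := (Real.sq_sqrt h0).symm
        _ ≤ specNorm M ^ 2 := pow_le_pow_left₀ (Real.sqrt_nonneg _) hle 2
    rw [hsum] at hsq
    have hc2pos : (0:ℝ) < c ^ 2 := pow_pos hcpos 2
    have hcc : c ^ 2 * c⁻¹ ^ 2 = 1 := by
      rw [← mul_pow, mul_inv_cancel₀ (ne_of_gt hcpos), one_pow]
    calc ∑ i, ‖M.mulVec v i‖ ^ 2
        = c ^ 2 * (c⁻¹ ^ 2 * ∑ i, ‖M.mulVec v i‖ ^ 2) := by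
          rw [← mul_assoc, hcc, one_mul]
      _ ≤ c ^ 2 * specNorm M ^ 2 := by
          exact mul_le_mul_of_nonneg_left hsq (le_of_lt hc2pos)
      _ = specNorm M ^ 2 * S := by rw [hc2]; ring

lemma frobSq_mul_le (A : Matrix m n ℂ) (B : Matrix n p ℂ) :
    frobSq (A * B) ≤ specNorm A ^ 2 * frobSq B := by
  have key : frobSq (A * B) = ∑ c, ∑ r, ‖A.mulVec (fun j => B j c) r‖ ^ 2 := by
    rw [frobSq, Finset.sum_comm]
    exact Finset.sum_congr rfl fun c _ => Finset.sum_congr rfl fun r _ => rfl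
  rw [key]
  calc ∑ c, ∑ r, ‖A.mulVec (fun j => B j c) r‖ ^ 2
      ≤ ∑ c, specNorm A ^ 2 * ∑ j, ‖B j c‖ ^ 2 :=
        Finset.sum_le_sum fun c _ => mulVec_sq_le A _
    _ = specNorm A ^ 2 * frobSq B := by
        rw [frobSq, Finset.sum_comm, Finset.mul_sum]

section Frob
attribute [local instance] Matrix.frobeniusSeminormedAddCommGroup

lemma sqrt_frobSq_eq_norm (A : Matrix m n ℂ) : Real.sqrt (frobSq A) = ‖A‖ := by
  rw [Matrix.frobenius_norm_def, ← Real.sqrt_eq_rpow, frobSq]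
  congr 1
  exact Finset.sum_congr rfl fun r _ => Finset.sum_congr rfl fun c _ => by
    rw [← Real.rpow_natCast ‖A r c‖ 2]; norm_num

lemma sqrt_frobSq_sum_le {ι : Type*} (s : Finset ι) (A : ι → Matrix m n ℂ) :
    Real.sqrt (frobSq (∑ i ∈ s, A i)) ≤ ∑ i ∈ s, Real.sqrt (frobSq (A i)) := by
  simp only [sqrt_frobSq_eq_norm]
  exact norm_sum_le s A

end Frob

lemma specNorm_zero : specNorm (0 : Matrix m n ℂ) = 0 := by
  have hsub : specSet (0 : Matrix m n ℂ) ⊆ {0} := by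
    rintro r ⟨v, -, rfl⟩
    simp [Matrix.zero_mulVec]
  rcases (Set.subset_singleton_iff_eq).1 hsub with h | h
  · rw [specNorm_eq, h, Real.sSup_empty]
  · rw [specNorm_eq, h, csSup_singleton]

lemma sum_range_le_of_eventually_zero {f : ℕ → ℝ} (hf : ∀ j, 0 ≤ f j) {t : ℕ}
    (h0 : ∀ j, t < j → f j = 0) (N : ℕ) :
    ∑ j ∈ Finset.range N, f j ≤ ∑ j ∈ Finset.range (t + 1), f j := by
  calc ∑ j ∈ Finset.range N, f j
      ≤ ∑ j ∈ Finset.range (max N (t + 1)), f j :=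
        Finset.sum_le_sum_of_subset_of_nonneg
          (Finset.range_subset_range.2 (le_max_left _ _)) (fun j _ _ => hf j)
    _ = ∑ j ∈ Finset.range (t + 1), f j := by
        refine (Finset.sum_subset (Finset.range_subset_range.2 (le_max_right _ _)) ?_).symm
        intro x hx hx'
        refine h0 x ?_
        have := Finset.mem_range.not.1 hx'
        omega

lemma frobSq_coeff {m' n' : Type*} [Fintype m'] [Fintype n']
    (M : Matrix m' n' (Polynomial ℂ)) (i : ℕ) :
    (∑ r, ∑ c, ‖(M r c).coeff i‖ ^ 2) = frobSq (polyCoeff M i) := rfl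

end PolyFrobAux

open PolyFrobAux in
/-- `‖P(λ)Q(λ)‖_F ≤ √(g+1) · √(∑_{i=0}^g ‖P_i‖₂²) · ‖Q(λ)‖_F` for matrix polynomials
`P` of grade `g` and `Q` of grade `t`. -/
theorem polyFrobNorm_mul_le {m n p : Type*} [Fintype m] [Fintype n] [Fintype p]
    (g t : ℕ) (P : Matrix m n (Polynomial ℂ)) (Q : Matrix n p (Polynomial ℂ))
    (hP : ∀ i j, (P i j).degree ≤ (g : ℕ)) (hQ : ∀ i j, (Q i j).degree ≤ (t : ℕ)) :
    polyFrobNorm (P * Q) ≤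
      Real.sqrt ((g : ℝ) + 1) *
        Real.sqrt (∑ i ∈ Finset.range (g + 1), specNorm (polyCoeff P i) ^ 2) *
        polyFrobNorm Q := by
  classical
  -- notation
  set a : ℕ → ℝ := fun i => specNorm (polyCoeff P i) with ha
  set f : ℕ → ℝ := fun j => frobSq (polyCoeff Q j) with hf
  set S : ℝ := ∑ i ∈ Finset.range (g + 1), a i ^ 2 with hSdef
  set T : ℝ := ∑ j ∈ Finset.range (t + 1), f j with hTdef
  have ha_nonneg : ∀ i, 0 ≤ a i := fun i => specNorm_nonneg _
  have hf_nonneg : ∀ j, 0 ≤ f j := fun j => frobSq_nonneg _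
  have hS0 : 0 ≤ S := Finset.sum_nonneg fun _ _ => sq_nonneg _
  have hT0 : 0 ≤ T := Finset.sum_nonneg fun _ _ => hf_nonneg _
  -- vanishing of P coefficients beyond g
  have hPzero : ∀ i, g < i → polyCoeff P i = 0 := by
    intro i hi
    ext r c
    have : (P r c).degree < (i : ℕ) :=
      lt_of_le_of_lt (hP r c) (by exact_mod_cast Nat.cast_lt.2 hi)
    simp [polyCoeff, Polynomial.coeff_eq_zero_of_degree_lt this]
  have haz : ∀ i, g < i → a i = 0 := by
    intro i hi; rw [ha]; simp only; rw [hPzero i hi]; exact specNorm_zero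
  -- vanishing of Q coefficients beyond t
  have hQzero : ∀ j, t < j → polyCoeff Q j = 0 := by
    intro j hj
    ext r c
    have : (Q r c).degree < (j : ℕ) :=
      lt_of_le_of_lt (hQ r c) (by exact_mod_cast Nat.cast_lt.2 hj)
    simp [polyCoeff, Polynomial.coeff_eq_zero_of_degree_lt this]
  have hfz : ∀ j, t < j → f j = 0 := by
    intro j hj; rw [hf]; simp only; rw [hQzero j hj, frobSq_zero]
  -- degree bound on the product entries
  have hPQdeg : ∀ r c, ((P * Q) r c).degree ≤ ((g + t : ℕ) : WithBot ℕ) := by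
    intro r c
    rw [Matrix.mul_apply]
    refine (Polynomial.degree_sum_le _ _).trans ?_
    refine Finset.sup_le fun j _ => ?_
    refine (Polynomial.degree_mul_le _ _).trans ?_
    calc (P r j).degree + (Q j c).degree ≤ ((g : ℕ) : WithBot ℕ) + ((t : ℕ) : WithBot ℕ) :=
          add_le_add (hP r j) (hQ j c)
      _ = ((g + t : ℕ) : WithBot ℕ) := by norm_cast
  have hPQzero : ∀ k, g + t < k → polyCoeff (P * Q) k = 0 := by
    intro k hk
    ext r c
    have : ((P * Q) r c).degree < (k : ℕ) :=
      lt_of_le_of_lt (hPQdeg r c) (by exact_mod_cast Nat.cast_lt.2 hk)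
    simp [polyCoeff, Polynomial.coeff_eq_zero_of_degree_lt this]
  -- rewriting the tsums as finite sums
  have hQnorm : polyFrobNorm Q = Real.sqrt T := by
    rw [polyFrobNorm]
    congr 1
    rw [tsum_eq_sum (s := Finset.range (t + 1)) ?_]
    · exact Finset.sum_congr rfl fun j _ => frobSq_coeff Q j
    · intro j hj
      have hj' : t < j := by have := Finset.mem_range.not.1 hj; omega
      rw [frobSq_coeff Q j]
      have : f j = 0 := hfz j hj'
      rw [hf] at this
      exact this
  have hPQnorm : polyFrobNorm (P * Q) =
      Real.sqrt (∑ k ∈ Finset.range (g + t + 1), frobSq (polyCoeff (P * Q) k)) := by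
    rw [polyFrobNorm]
    congr 1
    rw [tsum_eq_sum (s := Finset.range (g + t + 1)) ?_]
    · exact Finset.sum_congr rfl fun k _ => frobSq_coeff (P * Q) k
    · intro k hk
      have hk' : g + t < k := by have := Finset.mem_range.not.1 hk; omega
      rw [frobSq_coeff (P * Q) k, hPQzero k hk', frobSq_zero]
  -- the convolution formula for coefficients
  have hconv : ∀ k, polyCoeff (P * Q) k =
      ∑ i ∈ Finset.range (k + 1), polyCoeff P i * polyCoeff Q (k - i) := by
    intro k
    ext r c
    rw [Matrix.sum_apply]
    simp only [polyCoeff, Matrix.map_apply, Matrix.mul_apply, Matrix.map_apply]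
    rw [Polynomial.finset_sum_coeff]
    calc ∑ j, ((P r j) * (Q j c)).coeff k
        = ∑ j, ∑ i ∈ Finset.range (k + 1), (P r j).coeff i * (Q j c).coeff (k - i) := by
          refine Finset.sum_congr rfl fun j _ => ?_
          rw [Polynomial.coeff_mul, Finset.Nat.sum_antidiagonal_eq_sum_range_succ_mk]
      _ = ∑ i ∈ Finset.range (k + 1), ∑ j, (P r j).coeff i * (Q j c).coeff (k - i) :=
          Finset.sum_comm
  -- per-coefficient bound
  have hkey : ∀ k, frobSq (polyCoeff (P * Q) k) ≤
      S * ∑ i ∈ Finset.range (g + 1), (if i ≤ k then f (k - i) else 0) := by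
    intro k
    have htri : Real.sqrt (frobSq (polyCoeff (P * Q) k)) ≤
        ∑ i ∈ Finset.range (k + 1), a i * Real.sqrt (f (k - i)) := by
      rw [hconv k]
      refine (sqrt_frobSq_sum_le _ _).trans ?_
      refine Finset.sum_le_sum fun i _ => ?_
      have h1 : frobSq (polyCoeff P i * polyCoeff Q (k - i)) ≤ a i ^ 2 * f (k - i) :=
        frobSq_mul_le _ _
      calc Real.sqrt (frobSq (polyCoeff P i * polyCoeff Q (k - i)))
          ≤ Real.sqrt (a i ^ 2 * f (k - i)) := Real.sqrt_le_sqrt h1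
        _ = a i * Real.sqrt (f (k - i)) := by
            rw [Real.sqrt_mul (sq_nonneg _), Real.sqrt_sq (ha_nonneg i)]
    -- change index set from range (k+1) to range (g+1)
    set D : ℕ → ℝ := fun i => if i ≤ k then Real.sqrt (f (k - i)) else 0 with hD
    have hDeq : ∑ i ∈ Finset.range (k + 1), a i * Real.sqrt (f (k - i)) =
        ∑ i ∈ Finset.range (g + 1), a i * D i := by
      have hM : ∀ N : ℕ, k + 1 ≤ N → g + 1 ≤ N →
          (∑ i ∈ Finset.range (k + 1), a i * Real.sqrt (f (k - i)) =
            ∑ i ∈ Finset.range N, a i * D i) ∧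
          (∑ i ∈ Finset.range (g + 1), a i * D i = ∑ i ∈ Finset.range N, a i * D i) := by
        intro N hkN hgN
        constructor
        · rw [← Finset.sum_subset (Finset.range_subset_range.2 hkN)
            (f := fun i => a i * D i) ?_]
          · refine Finset.sum_congr rfl fun i hi => ?_
            have hik : i ≤ k := by have := Finset.mem_range.1 hi; omega
            rw [hD]; simp [hik]
          · intro x hx hx'
            have : k < x := by have := Finset.mem_range.not.1 hx'; omega
            rw [hD]; simp [Nat.not_le.2 this]
        · rw [← Finset.sum_subset (Finset.range_subset_range.2 hgN)
            (f := fun i => a i * D i) ?_]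
          intro x hx hx'
          have hgx : g < x := by have := Finset.mem_range.not.1 hx'; omega
          show a x * D x = 0
          rw [haz x hgx, zero_mul]
      obtain ⟨h1, h2⟩ := hM (max (k + 1) (g + 1)) (le_max_left _ _) (le_max_right _ _)
      rw [h1, h2]
    rw [hDeq] at htri
    have hRHS0 : 0 ≤ ∑ i ∈ Finset.range (g + 1), a i * D i := by
      refine Finset.sum_nonneg fun i _ => mul_nonneg (ha_nonneg i) ?_
      rw [hD]; dsimp only; split <;> [exact Real.sqrt_nonneg _; exact le_refl 0]
    have hsq : frobSq (polyCoeff (P * Q) k) ≤ (∑ i ∈ Finset.range (g + 1), a i * D i) ^ 2 := by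
      calc frobSq (polyCoeff (P * Q) k)
          = Real.sqrt (frobSq (polyCoeff (P * Q) k)) ^ 2 :=
            (Real.sq_sqrt (frobSq_nonneg _)).symm
        _ ≤ (∑ i ∈ Finset.range (g + 1), a i * D i) ^ 2 :=
            pow_le_pow_left₀ (Real.sqrt_nonneg _) htri 2
    have hcs : (∑ i ∈ Finset.range (g + 1), a i * D i) ^ 2 ≤
        S * ∑ i ∈ Finset.range (g + 1), D i ^ 2 :=
      Finset.sum_mul_sq_le_sq_mul_sq _ _ _
    have hD2 : ∀ i, D i ^ 2 = if i ≤ k then f (k - i) else 0 := by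
      intro i
      rw [hD]; dsimp only; split
      · exact Real.sq_sqrt (hf_nonneg _)
      · exact zero_pow (by norm_num)
    calc frobSq (polyCoeff (P * Q) k)
        ≤ S * ∑ i ∈ Finset.range (g + 1), D i ^ 2 := hsq.trans hcs
      _ = S * ∑ i ∈ Finset.range (g + 1), (if i ≤ k then f (k - i) else 0) := by
          congr 1; exact Finset.sum_congr rfl fun i _ => hD2 i
  -- summing over k
  have hsumk : ∑ k ∈ Finset.range (g + t + 1), frobSq (polyCoeff (P * Q) k) ≤
      ((g : ℝ) + 1) * S * T := by
    calc ∑ k ∈ Finset.range (g + t + 1), frobSq (polyCoeff (P * Q) k)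
        ≤ ∑ k ∈ Finset.range (g + t + 1),
            S * ∑ i ∈ Finset.range (g + 1), (if i ≤ k then f (k - i) else 0) :=
          Finset.sum_le_sum fun k _ => hkey k
      _ = S * ∑ i ∈ Finset.range (g + 1), ∑ k ∈ Finset.range (g + t + 1),
            (if i ≤ k then f (k - i) else 0) := by
          rw [← Finset.mul_sum, Finset.sum_comm]
      _ ≤ S * ∑ i ∈ Finset.range (g + 1), T := by
          refine mul_le_mul_of_nonneg_left ?_ hS0
          refine Finset.sum_le_sum fun i hi => ?_
          have hig : i ≤ g := by have := Finset.mem_range.1 hi; omega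
          have hiN : i ≤ g + t + 1 := by omega
          have hsplit : ∑ k ∈ Finset.range (g + t + 1), (if i ≤ k then f (k - i) else 0) =
              ∑ j ∈ Finset.range (g + t + 1 - i), f j := by
            have h3 : ∑ k ∈ Finset.range (g + t + 1), (if i ≤ k then f (k - i) else 0) =
                (∑ k ∈ Finset.Ico 0 i, if i ≤ k then f (k - i) else 0) +
                  ∑ k ∈ Finset.Ico i (g + t + 1), (if i ≤ k then f (k - i) else 0) := by
              rw [Finset.sum_Ico_consecutive _ (Nat.zero_le i) hiN, ← Finset.range_eq_Ico]
            have h1 : ∑ k ∈ Finset.Ico 0 i, (if i ≤ k then f (k - i) else 0) = 0 := by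
              refine Finset.sum_eq_zero fun k hk => ?_
              have : k < i := (Finset.mem_Ico.1 hk).2
              simp [Nat.not_le.2 this]
            have h2 : ∑ k ∈ Finset.Ico i (g + t + 1), (if i ≤ k then f (k - i) else 0) =
                ∑ j ∈ Finset.range (g + t + 1 - i), f j := by
              rw [Finset.sum_Ico_eq_sum_range]
              refine Finset.sum_congr rfl fun j _ => ?_
              have : i ≤ i + j := Nat.le_add_right _ _
              simp [this]
            rw [h3, h1, h2, zero_add]
          rw [hsplit]
          exact sum_range_le_of_eventually_zero hf_nonneg hfz _
      _ = ((g : ℝ) + 1) * S * T := by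
          rw [Finset.sum_const, Finset.card_range, nsmul_eq_mul]
          push_cast
          ring
  -- conclude
  rw [hPQnorm, hQnorm]
  calc Real.sqrt (∑ k ∈ Finset.range (g + t + 1), frobSq (polyCoeff (P * Q) k))
      ≤ Real.sqrt (((g : ℝ) + 1) * S * T) := Real.sqrt_le_sqrt hsumk
    _ = Real.sqrt ((g : ℝ) + 1) * Real.sqrt S * Real.sqrt T := by
        rw [Real.sqrt_mul (by positivity), Real.sqrt_mul (by positivity)]
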